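/- Let (uₙ)_{n≥0} be a sequence of real polynomials in x, all of whose coefficients are nonnegative, satisfying the recursion (n+1) u_{n+1} = Σ_{k=0}^{n} u_k · u'_{n−k} + u'''_n for every n ≥ 0 (where ' denotes d/dx). Suppose u₀ has degree d₀ ≥ 2. Then for every n ≥ 0, the degree dₙ of uₙ equals (n+1) d₀ − n. -/
import Mathlib

open Polynomial

lemma kdv_deriv_info (p : Polynomial ℝ) (m : ℕ) (h : p.natDegree = m + 1) (hp0 : p ≠ 0) :
    (derivative p).natDegree = m ∧ (derivative p).coeff m ≠ 0 := by
  have hc : p.coeff (m + 1) ≠ 0 := by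
    have := Polynomial.leadingCoeff_ne_zero.mpr hp0
    rwa [Polynomial.leadingCoeff, h] at this
  have hcm : (derivative p).coeff m = p.coeff (m + 1) * (m + 1) :=
    Polynomial.coeff_derivative p m
  have hne : (derivative p).coeff m ≠ 0 := by
    rw [hcm]
    exact mul_ne_zero hc (by positivity)
  refine ⟨le_antisymm ?_ (Polynomial.le_natDegree_of_ne_zero hne), hne⟩
  exact (Polynomial.natDegree_derivative_le p).trans (by omega)

lemma kdv_deriv_coeff_nonneg (p : Polynomial ℝ) (hp : ∀ k, 0 ≤ p.coeff k) (n : ℕ) :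
    0 ≤ (derivative p).coeff n := by
  rw [Polynomial.coeff_derivative]
  have : (0:ℝ) ≤ (n:ℝ) + 1 := by positivity
  exact mul_nonneg (hp _) this

theorem kdv_recursion_degree
    (u : ℕ → Polynomial ℝ)
    (hnonneg : ∀ n k, 0 ≤ (u n).coeff k)
    (hrec : ∀ n : ℕ, ((n : ℝ) + 1) • u (n + 1) =
      ∑ k ∈ Finset.range (n + 1), u k * Polynomial.derivative (u (n - k))
        + Polynomial.derivative (Polynomial.derivative (Polynomial.derivative (u n))))
    (d₀ : ℕ) (hd₀ : 2 ≤ d₀) (hdeg : (u 0).natDegree = d₀) :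
    ∀ n : ℕ, (u n).natDegree = (n + 1) * d₀ - n := by
  obtain ⟨e, rfl⟩ : ∃ e, d₀ = e + 2 := ⟨d₀ - 2, by omega⟩
  suffices h : ∀ n, (u n).natDegree = n * (e + 1) + (e + 2) by
    intro n
    have h2 : (n + 1) * (e + 2) = (n * (e + 1) + (e + 2)) + n := by ring
    rw [h n]; omega
  intro n
  induction n using Nat.strong_induction_on with
  | _ n ih =>
    match n with
    | 0 => simpa using hdeg
    | n + 1 =>
      have hdegk : ∀ k ≤ n, (u k).natDegree = k * (e + 1) + (e + 2) :=
        fun k hk => ih k (by omega)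
      have hne : ∀ k ≤ n, u k ≠ 0 := by
        intro k hk h0
        have := hdegk k hk
        rw [h0, Polynomial.natDegree_zero] at this
        omega
      have hderiv : ∀ k ≤ n, (derivative (u k)).natDegree = k * (e + 1) + (e + 1) ∧
          (derivative (u k)).coeff (k * (e + 1) + (e + 1)) ≠ 0 := by
        intro k hk
        exact kdv_deriv_info (u k) _ (by rw [hdegk k hk]; omega) (hne k hk)
      set D := (n + 1) * (e + 1) + (e + 2) with hD
      -- degree facts about each product term
      have hterm : ∀ k ∈ Finset.range (n + 1),
          (u k * derivative (u (n - k))).natDegree ≤ D ∧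
          0 < (u k * derivative (u (n - k))).coeff D := by
        intro k hk
        rw [Finset.mem_range] at hk
        have hk' : k ≤ n := by omega
        have hnk : n - k ≤ n := Nat.sub_le _ _
        have hsum : (u k).natDegree + (derivative (u (n - k))).natDegree = D := by
          obtain ⟨m, hm1, hm2⟩ : ∃ m, n - k = m ∧ k + m = n := ⟨n - k, rfl, by omega⟩
          rw [hdegk k hk', hm1, (hderiv m (by omega)).1, hD, ← hm2]
          ring
        constructor
        · calc (u k * derivative (u (n - k))).natDegree
              ≤ (u k).natDegree + (derivative (u (n - k))).natDegree :=
                Polynomial.natDegree_mul_le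
            _ = D := hsum
        · have := Polynomial.coeff_mul_degree_add_degree (u k) (derivative (u (n - k)))
          rw [hsum] at this
          rw [this]
          have h1 : (0:ℝ) < (u k).leadingCoeff :=
            lt_of_le_of_ne (hnonneg k _) (Ne.symm (Polynomial.leadingCoeff_ne_zero.mpr (hne k hk')))
          have h2 : (0:ℝ) < (derivative (u (n - k))).leadingCoeff := by
            have hnz : (derivative (u (n - k))).leadingCoeff ≠ 0 := by
              rw [Polynomial.leadingCoeff, (hderiv (n - k) hnk).1]
              exact (hderiv (n - k) hnk).2
            exact lt_of_le_of_ne (kdv_deriv_coeff_nonneg _ (hnonneg (n - k)) _) (Ne.symm hnz)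
          exact mul_pos h1 h2
      -- the triple derivative term has natDegree < D
      have h3d : (derivative (derivative (derivative (u n)))).natDegree < D := by
        have t1 := Polynomial.natDegree_derivative_le (u n)
        have t2 := Polynomial.natDegree_derivative_le (derivative (u n))
        have t3 := Polynomial.natDegree_derivative_le (derivative (derivative (u n)))
        have h2 := hdegk n le_rfl
        have hDval : D = n * (e + 1) + (2 * e + 3) := by rw [hD]; ring
        omega
      -- coefficient of RHS at D is positive
      have hRHS : (0:ℝ) < (∑ k ∈ Finset.range (n + 1), u k * derivative (u (n - k))
          + derivative (derivative (derivative (u n)))).coeff D := by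
        rw [Polynomial.coeff_add, Polynomial.coeff_eq_zero_of_natDegree_lt h3d, add_zero,
          Polynomial.finset_sum_coeff]
        exact Finset.sum_pos (fun k hk => (hterm k hk).2) ⟨0, Finset.mem_range.mpr (by omega)⟩
      -- RHS coefficients vanish above D
      have hRHS0 : ∀ j, D < j → (∑ k ∈ Finset.range (n + 1), u k * derivative (u (n - k))
          + derivative (derivative (derivative (u n)))).coeff j = 0 := by
        intro j hj
        rw [Polynomial.coeff_add, Polynomial.finset_sum_coeff]
        have : ∀ k ∈ Finset.range (n + 1), (u k * derivative (u (n - k))).coeff j = 0 :=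
          fun k hk => Polynomial.coeff_eq_zero_of_natDegree_lt (lt_of_le_of_lt (hterm k hk).1 hj)
        simp [Finset.sum_eq_zero this, Polynomial.coeff_eq_zero_of_natDegree_lt (h3d.trans hj)]
      have hn1 : ((n:ℝ) + 1) ≠ 0 := by positivity
      have hcoeff : ∀ j, ((n:ℝ) + 1) * (u (n + 1)).coeff j
          = (∑ k ∈ Finset.range (n + 1), u k * derivative (u (n - k))
            + derivative (derivative (derivative (u n)))).coeff j := by
        intro j
        rw [← hrec n, Polynomial.coeff_smul, smul_eq_mul]
      refine le_antisymm ?_ ?_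
      · rw [Polynomial.natDegree_le_iff_coeff_eq_zero]
        intro j hj
        have := hcoeff j
        rw [hRHS0 j hj] at this
        exact (mul_eq_zero.mp this).resolve_left hn1
      · apply Polynomial.le_natDegree_of_ne_zero
        intro h0
        have := hcoeff D
        rw [h0, mul_zero] at this
        exact hRHS.ne' this.symm
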